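/- Primed-index invariance of the q-epsilon tensor: Σ_{j_1,...,j_N} ε_q^{j_1...j_N} g_{j_1 i_1}⋯g_{j_N i_N} = ε_q^{i_1'...i_N'} = (−1)^{⌊N/2⌋} ε_q^{i_1...i_N} for all index tuples (i_1,...,i_N), where a'=N+1−a and g_{ab}=δ_{a,b'}. -/

import Mathlib

/-- The q-epsilon tensor on `N` letters: `ε_q^{1...N} = 1`, it vanishes on
tuples with a repeated index, and swapping two adjacent entries `...ab...`
produces a factor `−q(a,b)` (so `ε_q^{...ab...} = −q(a,b) ε_q^{...ba...}`).
Explicitly, on an injective tuple it is the product over all inversions of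
the corresponding factors `−q`. -/
def epsQ {N : ℕ} (q : Fin N → Fin N → ℂ) (i : Fin N → Fin N) : ℂ :=
  if Function.Injective i then
    ∏ p ∈ Finset.univ.filter (fun p : Fin N × Fin N => p.1 < p.2 ∧ i p.2 < i p.1),
      (-(q (i p.1) (i p.2)))
  else 0

open Finset in
/-- There are exactly `⌊N/2⌋` pairs `(a, b)` with `a < b` and `a = b'`. -/
lemma epsQ_card_aux (N : ℕ) :
    (Finset.univ.filter fun p : Fin N × Fin N => p.1 < p.2 ∧ p.1 = Fin.rev p.2).card
      = N / 2 := by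
  rw [show N / 2 = (Finset.range (N / 2)).card from (Finset.card_range _).symm]
  refine Finset.card_bij' (fun p _ => p.2.val - (N - N / 2))
    (fun k hk => (⟨N - 1 - (k + (N - N / 2)),
        by have := Finset.mem_range.mp hk; omega⟩,
      ⟨k + (N - N / 2), by have := Finset.mem_range.mp hk; omega⟩)) ?_ ?_ ?_ ?_
  · intro p hp
    simp only [Finset.mem_filter, Finset.mem_univ, true_and, Fin.lt_def, Fin.ext_iff,
      Fin.val_rev] at hp
    simp only [Finset.mem_range]
    omega
  · intro k hk
    have := Finset.mem_range.mp hk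
    simp only [Finset.mem_filter, Finset.mem_univ, true_and, Fin.lt_def, Fin.ext_iff,
      Fin.val_rev]
    omega
  · intro p hp
    simp only [Finset.mem_filter, Finset.mem_univ, true_and, Fin.lt_def, Fin.ext_iff,
      Fin.val_rev] at hp
    ext
    · simp only [Fin.ext_iff]; omega
    · simp only [Fin.ext_iff]; omega
  · intro k hk
    have := Finset.mem_range.mp hk
    simp only
    omega

open Finset in
/-- The product of `−q(a,b)` over all pairs `a < b` equals `(−1)^⌊N/2⌋`. -/
lemma epsQ_C {N : ℕ} (q : Fin N → Fin N → ℂ)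
    (h1 : ∀ a, q a a = 1) (h2 : ∀ a b, q a b * q b a = 1)
    (h3 : ∀ a b, q a b * q a (Fin.rev b) = 1)
    (h4 : ∀ a b, q a b = q (Fin.rev a) (Fin.rev b)) :
    (∏ p ∈ Finset.univ.filter (fun p : Fin N × Fin N => p.1 < p.2), (-(q p.1 p.2)))
      = (-1 : ℂ) ^ (N / 2) := by
  classical
  have hqrev : ∀ a : Fin N, q a (Fin.rev a) = 1 := by
    intro a
    have := h3 a a
    rw [h1, one_mul] at this
    exact this
  rw [← Finset.prod_filter_mul_prod_filter_not
      (Finset.univ.filter fun p : Fin N × Fin N => p.1 < p.2)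
      (fun p => p.1 = Fin.rev p.2) (fun p => (-(q p.1 p.2)))]
  rw [Finset.filter_filter, Finset.filter_filter]
  have hA : (∏ p ∈ Finset.univ.filter
      (fun p : Fin N × Fin N => p.1 < p.2 ∧ p.1 = Fin.rev p.2), (-(q p.1 p.2)))
      = (-1 : ℂ) ^ (N / 2) := by
    rw [Finset.prod_congr rfl (g := fun _ => (-1 : ℂ)) (fun p hp => ?_)]
    · rw [Finset.prod_const, epsQ_card_aux]
    · simp only [Finset.mem_filter] at hp
      rw [hp.2.2]
      have := hqrev (Fin.rev p.2)
      rw [Fin.rev_rev] at this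
      rw [this]
  have hB : (∏ p ∈ Finset.univ.filter
      (fun p : Fin N × Fin N => p.1 < p.2 ∧ ¬p.1 = Fin.rev p.2), (-(q p.1 p.2)))
      = 1 := by
    refine Finset.prod_involution
      (fun p _ => (Fin.rev p.2, Fin.rev p.1)) ?_ ?_ ?_ ?_
    · intro p _
      have : q (Fin.rev p.2) (Fin.rev p.1) = q p.2 p.1 := (h4 p.2 p.1).symm
      simp only [this, neg_mul_neg]
      exact h2 p.1 p.2
    · intro p hp _
      simp only [Finset.mem_filter] at hp
      intro hcontra
      exact hp.2.2 (by rw [← congrArg Prod.fst hcontra])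
    · intro p hp
      simp only [Finset.mem_filter, Finset.mem_univ, true_and] at hp ⊢
      constructor
      · exact Fin.rev_lt_rev.mpr hp.1
      · rw [Fin.rev_rev]
        intro hcontra
        exact hp.2 (by rw [hcontra])
    · intro p _
      simp [Fin.rev_rev]
  rw [hA, hB, mul_one]

/-- primed-index invariance of the q-epsilon tensor:
`Σ_j ε_q^{j_1...j_N} g_{j_1 i_1}⋯g_{j_N i_N} = ε_q^{i_1'...i_N'}
 = (−1)^⌊N/2⌋ ε_q^{i_1...i_N}` for all tuples `i`, where `a' = Fin.rev a`
and `g_{ab} = δ_{a,b'}`. -/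
theorem epsQ_primed {N : ℕ} (q : Fin N → Fin N → ℂ)
    (h1 : ∀ a, q a a = 1)
    (h2 : ∀ a b, q a b * q b a = 1)
    (h3 : ∀ a b, q a b * q a (Fin.rev b) = 1)
    (h4 : ∀ a b, q a b = q (Fin.rev a) (Fin.rev b)) :
    ∀ i : Fin N → Fin N,
      (∑ j : Fin N → Fin N,
          epsQ q j * ∏ k, (if j k = Fin.rev (i k) then (1 : ℂ) else 0))
        = epsQ q (fun k => Fin.rev (i k)) ∧
      epsQ q (fun k => Fin.rev (i k)) = (-1 : ℂ) ^ (N / 2) * epsQ q i := by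
  classical
  intro i
  constructor
  · have key : ∀ j : Fin N → Fin N,
        (∏ k, (if j k = Fin.rev (i k) then (1 : ℂ) else 0))
          = if j = (fun k => Fin.rev (i k)) then 1 else 0 := by
      intro j
      by_cases h : j = fun k => Fin.rev (i k)
      · subst h; simp
      · obtain ⟨k, hk⟩ := Function.ne_iff.mp h
        rw [if_neg h]
        exact Finset.prod_eq_zero (Finset.mem_univ k) (if_neg hk)
    simp only [key, mul_ite, mul_one, mul_zero]
    rw [Finset.sum_ite_eq' Finset.univ (fun k => Fin.rev (i k)) (fun j => epsQ q j)]
    simp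
  · by_cases hi : Function.Injective i
    case neg =>
      have hrevi : ¬ Function.Injective (fun k => Fin.rev (i k)) := by
        intro hc
        exact hi (fun a b hab => hc (by simp [hab]))
      rw [epsQ, epsQ, if_neg hi, if_neg hrevi, mul_zero]
    case pos =>
      have hbij : Function.Bijective i := (Finite.injective_iff_bijective).mp hi
      have hrevi : Function.Injective (fun k => Fin.rev (i k)) :=
        fun a b hab => hi (Fin.rev_injective hab)
      rw [epsQ, epsQ, if_pos hrevi, if_pos hi]
      set F : Fin N × Fin N → ℂ := fun p => -(q (i p.1) (i p.2)) with hF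
      -- rewrite the left-hand side
      have stepA : (∏ p ∈ Finset.univ.filter (fun p : Fin N × Fin N =>
            p.1 < p.2 ∧ (fun k => Fin.rev (i k)) p.2 < (fun k => Fin.rev (i k)) p.1),
            (-(q ((fun k => Fin.rev (i k)) p.1) ((fun k => Fin.rev (i k)) p.2))))
          = ∏ p ∈ Finset.univ.filter
              (fun p : Fin N × Fin N => p.1 < p.2 ∧ i p.1 < i p.2), F p := by
        have hset : (Finset.univ.filter (fun p : Fin N × Fin N =>
              p.1 < p.2 ∧ (fun k => Fin.rev (i k)) p.2 < (fun k => Fin.rev (i k)) p.1))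
            = Finset.univ.filter
              (fun p : Fin N × Fin N => p.1 < p.2 ∧ i p.1 < i p.2) := by
          apply Finset.filter_congr
          intro p _
          simp only [Fin.rev_lt_rev]
        rw [hset]
        apply Finset.prod_congr rfl
        intro p _
        simp only [hF, ← h4]
      rw [stepA]
      set A := ∏ p ∈ Finset.univ.filter
          (fun p : Fin N × Fin N => p.1 < p.2 ∧ i p.1 < i p.2), F p with hA
      set B := ∏ p ∈ Finset.univ.filter
          (fun p : Fin N × Fin N => p.1 < p.2 ∧ i p.2 < i p.1), F p with hB
      set D := ∏ p ∈ Finset.univ.filter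
          (fun p : Fin N × Fin N => p.1 < p.2 ∧ i p.2 < i p.1),
          (-(q (i p.2) (i p.1))) with hD
      have hDB : D * B = 1 := by
        rw [hD, hB, ← Finset.prod_mul_distrib]
        rw [Finset.prod_congr rfl (g := fun _ => (1:ℂ)) ?_, Finset.prod_const_one]
        intro p _
        simp only [hF, neg_mul_neg]
        exact h2 (i p.2) (i p.1)
      have hAD : A * D = (-1 : ℂ) ^ (N / 2) := by
        rw [hA, hD, Finset.prod_filter, Finset.prod_filter]
        have hDswap : (∏ p : Fin N × Fin N,
              if p.1 < p.2 ∧ i p.2 < i p.1 then -(q (i p.2) (i p.1)) else 1)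
            = ∏ p : Fin N × Fin N,
              if p.2 < p.1 ∧ i p.1 < i p.2 then F p else 1 := by
          apply Fintype.prod_equiv (Equiv.prodComm (Fin N) (Fin N))
          intro p
          rfl
        rw [hDswap, ← Finset.prod_mul_distrib]
        have hpt : ∀ p : Fin N × Fin N,
            ((if p.1 < p.2 ∧ i p.1 < i p.2 then F p else 1) *
              (if p.2 < p.1 ∧ i p.1 < i p.2 then F p else 1))
            = if i p.1 < i p.2 then F p else 1 := by
          intro p
          rcases lt_trichotomy p.1 p.2 with h | h | h
          · simp [h, not_lt.mpr h.le, lt_asymm h]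
          · have : ¬ i p.1 < i p.2 := by rw [h]; exact lt_irrefl _
            simp [h, this]
          · simp [h, lt_asymm h, not_lt.mpr h.le]
        rw [Finset.prod_congr rfl (fun p _ => hpt p)]
        have hre : (∏ p : Fin N × Fin N, if i p.1 < i p.2 then F p else 1)
            = ∏ p : Fin N × Fin N, if p.1 < p.2 then -(q p.1 p.2) else 1 := by
          exact Fintype.prod_bijective (Prod.map i i) (hbij.prodMap hbij)
            _ _ (fun p => rfl)
        rw [hre, ← Finset.prod_filter]
        exact epsQ_C q h1 h2 h3 h4
      calc A = A * (D * B) := by rw [hDB, mul_one]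
        _ = (A * D) * B := by ring
        _ = (-1 : ℂ) ^ (N / 2) * B := by rw [hAD]
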